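/- Let P : ℂⁿ → ℂ be an m-homogeneous polynomial with non-symmetric associated m-form L_P (supported on nondecreasing indices), and let S_k L_P be the partial symmetrization over the first k arguments. Then for i ∈ {1,...,n}^m: c_i(S_k L_P) = c_{i*}(L_P)/|[(i₁,...,i_k)]| if (i_{k+1},...,i_m) is nondecreasing and max{i₁,...,i_k} ≤ i_{k+1}; otherwise c_i(S_k L_P) = 0. -/

import Mathlib

/-- The (non-symmetric) `m`-form associated to a coefficient array `c`
(supported on nondecreasing multi-indices):
`L_P(x⁽¹⁾,…,x⁽ᵐ⁾) = Σ_j c_j x⁽¹⁾_{j₁}⋯x⁽ᵐ⁾_{j_m}`. -/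
noncomputable def LP (n m : ℕ) (c : (Fin m → Fin n) → ℂ) : (Fin m → (Fin n → ℂ)) → ℂ :=
  fun x => ∑ j : Fin m → Fin n, c j * ∏ k : Fin m, x k (j k)

/-- Partial symmetrization over the first `k` arguments:
`S_k L(x⁽¹⁾,…,x⁽ᵐ⁾) = (1/k!) Σ_{σ∈Σ_k} L(x⁽σ(1)⁾,…,x⁽σ(k)⁾,x⁽ᵏ⁺¹⁾,…,x⁽ᵐ⁾)`,
realized as the sum over permutations of `Fin m` fixing all positions `≥ k`. -/
noncomputable def partialSym (n m k : ℕ) (L : (Fin m → (Fin n → ℂ)) → ℂ) :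
    (Fin m → (Fin n → ℂ)) → ℂ :=
  fun x => (Nat.factorial k : ℂ)⁻¹ *
    ∑ σ ∈ Finset.univ.filter
        (fun σ : Equiv.Perm (Fin m) => ∀ i : Fin m, k ≤ (i : ℕ) → σ i = i),
      L (fun u => x (σ u))

/-- The coefficient `c_i(L) = L(e_{i₁},…,e_{i_m})` of an `m`-form. -/
noncomputable def coeff (n m : ℕ) (L : (Fin m → (Fin n → ℂ)) → ℂ) (i : Fin m → Fin n) : ℂ :=
  L (fun k => Pi.single (i k) 1)

/-- The permutation-equivalence class of a multi-index. -/
def indexClass (n k : ℕ) (i : Fin k → Fin n) : Finset (Fin k → Fin n) :=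
  Finset.univ.filter fun j => ∃ σ : Equiv.Perm (Fin k), j = fun u => i (σ u)

/-- `c_i(S_k L_P) = c_{i*}(L_P)/|[(i₁,…,i_k)]|` if `(i_{k+1},…,i_m)` is
nondecreasing and `max{i₁,…,i_k} ≤ i_{k+1}`, and `c_i(S_k L_P) = 0` otherwise.
Here `j = i*` is the nondecreasing rearrangement of `i`. -/
private lemma coeff_LP (n m : ℕ) (c : (Fin m → Fin n) → ℂ) (i : Fin m → Fin n) :
    coeff n m (LP n m c) i = c i := by
  unfold coeff LP
  rw [Finset.sum_eq_single i]
  · simp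
  · intro j _ hji
    obtain ⟨u, hu⟩ := Function.ne_iff.mp hji
    refine mul_eq_zero_of_right _ (Finset.prod_eq_zero (Finset.mem_univ u) ?_)
    simp [Pi.single_eq_of_ne hu]
  · simp

private noncomputable def extPerm {k m : ℕ} (hk : k ≤ m) (τ : Equiv.Perm (Fin k)) :
    Equiv.Perm (Fin m) :=
  Equiv.ofBijective (fun x => if h : (x : ℕ) < k then Fin.castLE hk (τ ⟨x, h⟩) else x)
    (Finite.injective_iff_bijective.mp (by
      intro x y hxy
      dsimp only at hxy
      by_cases hx : (x : ℕ) < k <;> by_cases hy : (y : ℕ) < k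
      · rw [dif_pos hx, dif_pos hy] at hxy
        have h1 := congrArg Fin.val hxy
        simp only [Fin.coe_castLE] at h1
        have h2 : τ ⟨x, hx⟩ = τ ⟨y, hy⟩ := Fin.ext h1
        have h3 := congrArg Fin.val (τ.injective h2)
        exact Fin.ext h3
      · rw [dif_pos hx, dif_neg hy] at hxy
        have h1 := congrArg Fin.val hxy
        simp only [Fin.coe_castLE] at h1
        have := (τ ⟨x, hx⟩).isLt
        omega
      · rw [dif_neg hx, dif_pos hy] at hxy
        have h1 := congrArg Fin.val hxy
        simp only [Fin.coe_castLE] at h1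
        have := (τ ⟨y, hy⟩).isLt
        omega
      · rw [dif_neg hx, dif_neg hy] at hxy
        exact hxy))

private lemma extPerm_apply {k m : ℕ} (hk : k ≤ m) (τ : Equiv.Perm (Fin k)) (x : Fin m) :
    extPerm hk τ x = if h : (x : ℕ) < k then Fin.castLE hk (τ ⟨x, h⟩) else x := rfl

private lemma extPerm_ge {k m : ℕ} (hk : k ≤ m) (τ : Equiv.Perm (Fin k)) :
    ∀ x : Fin m, k ≤ (x : ℕ) → extPerm hk τ x = x := by
  intro x hx
  rw [extPerm_apply, dif_neg (not_lt.2 hx)]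

private lemma extPerm_castLE {k m : ℕ} (hk : k ≤ m) (τ : Equiv.Perm (Fin k)) (u : Fin k) :
    extPerm hk τ (Fin.castLE hk u) = Fin.castLE hk (τ u) := by
  rw [extPerm_apply]
  have hu : ((Fin.castLE hk u : Fin m) : ℕ) < k := u.isLt
  rw [dif_pos hu]
  exact congrArg (fun z => Fin.castLE hk (τ z)) (Fin.ext rfl)

private lemma exists_extPerm {k m : ℕ} (hk : k ≤ m) (σ : Equiv.Perm (Fin m))
    (hσ : ∀ x : Fin m, k ≤ (x : ℕ) → σ x = x) :
    ∃ τ : Equiv.Perm (Fin k), extPerm hk τ = σ := by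
  have hlt : ∀ x : Fin m, (x : ℕ) < k → ((σ x : ℕ) < k) := by
    intro x hx
    by_contra h
    have h1 : σ (σ x) = σ x := hσ _ (not_lt.1 h)
    have h2 : σ x = x := σ.injective h1
    rw [h2] at h
    exact h hx
  let g : Fin k → Fin k := fun u => ⟨σ (Fin.castLE hk u), hlt _ u.isLt⟩
  have hg : Function.Injective g := by
    intro a b hab
    have h1 := congrArg Fin.val hab
    have h2 : σ (Fin.castLE hk a) = σ (Fin.castLE hk b) := Fin.ext h1
    have h3 := congrArg Fin.val (σ.injective h2)
    exact Fin.ext h3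
  refine ⟨Equiv.ofBijective g (Finite.injective_iff_bijective.mp hg), ?_⟩
  apply Equiv.ext
  intro x
  rw [extPerm_apply]
  by_cases h : (x : ℕ) < k
  · rw [dif_pos h]
    show Fin.castLE hk (g ⟨x, h⟩) = σ x
    apply Fin.ext
    show ((σ (Fin.castLE hk ⟨(x : ℕ), h⟩) : Fin m) : ℕ) = ((σ x : Fin m) : ℕ)
    exact congrArg Fin.val (congrArg σ (Fin.ext rfl))
  · rw [dif_neg h]
    exact (hσ x (not_lt.1 h)).symm

private def Aext (k m n : ℕ) (i : Fin m → Fin n) (f : Fin k → Fin n) : Fin m → Fin n :=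
  fun x => if h : (x : ℕ) < k then f ⟨x, h⟩ else i x

private lemma Aext_lt {k m n : ℕ} (i : Fin m → Fin n) (f : Fin k → Fin n) (x : Fin m)
    (h : (x : ℕ) < k) : Aext k m n i f x = f ⟨x, h⟩ := dif_pos h

private lemma Aext_ge {k m n : ℕ} (i : Fin m → Fin n) (f : Fin k → Fin n) (x : Fin m)
    (h : ¬ (x : ℕ) < k) : Aext k m n i f x = i x := dif_neg h

private lemma Aext_cast {k m n : ℕ} (hk : k ≤ m) (i : Fin m → Fin n) (f : Fin k → Fin n)
    (u : Fin k) : Aext k m n i f (Fin.castLE hk u) = f u := by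
  have hu : ((Fin.castLE hk u : Fin m) : ℕ) < k := u.isLt
  rw [Aext_lt i f _ hu]
  exact congrArg f (Fin.ext rfl)

private lemma Aext_extPerm {k m n : ℕ} (hk : k ≤ m) (i : Fin m → Fin n)
    (τ : Equiv.Perm (Fin k)) :
    (fun u => i (extPerm hk τ u)) = Aext k m n i (fun u => i (Fin.castLE hk (τ u))) := by
  funext x
  by_cases h : (x : ℕ) < k
  · rw [Aext_lt i _ x h]
    have hx : extPerm hk τ x = Fin.castLE hk (τ ⟨(x : ℕ), h⟩) := by
      rw [extPerm_apply, dif_pos h]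
    exact congrArg i hx
  · rw [Aext_ge i _ x h, extPerm_ge hk τ x (not_lt.1 h)]

theorem coeff_partialSym (n m k : ℕ) (hk : k ≤ m)
    (c : (Fin m → Fin n) → ℂ)
    (hc : ∀ j : Fin m → Fin n, ¬ Monotone j → c j = 0)
    (i : Fin m → Fin n)
    (j : Fin m → Fin n) (hj : Monotone j)
    (hij : ∃ σ : Equiv.Perm (Fin m), ∀ u : Fin m, i u = j (σ u)) :
    ((((∀ u v : Fin m, k ≤ (u : ℕ) → u ≤ v → i u ≤ i v) ∧
        (∀ u v : Fin m, (u : ℕ) < k → (v : ℕ) = k → i u ≤ i v)) →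
      coeff n m (partialSym n m k (LP n m c)) i =
        c j / ((indexClass n k (fun u : Fin k => i (Fin.castLE hk u))).card : ℂ)) ∧
    ((¬ ((∀ u v : Fin m, k ≤ (u : ℕ) → u ≤ v → i u ≤ i v) ∧
        (∀ u v : Fin m, (u : ℕ) < k → (v : ℕ) = k → i u ≤ i v))) →
      coeff n m (partialSym n m k (LP n m c)) i = 0)) := by
  obtain ⟨σ₀, hσ₀⟩ := hij
  -- master formula
  have key : coeff n m (partialSym n m k (LP n m c)) i
      = (Nat.factorial k : ℂ)⁻¹ *
        ∑ τ : Equiv.Perm (Fin k), c (Aext k m n i (fun u => i (Fin.castLE hk (τ u)))) := by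
    have e1 : coeff n m (partialSym n m k (LP n m c)) i
        = (Nat.factorial k : ℂ)⁻¹ * ∑ σ ∈ Finset.univ.filter
            (fun σ : Equiv.Perm (Fin m) => ∀ x : Fin m, k ≤ (x : ℕ) → σ x = x),
            c (fun u => i (σ u)) := by
      unfold coeff partialSym
      congr 1
      exact Finset.sum_congr rfl fun σ _ => coeff_LP n m c (fun u => i (σ u))
    rw [e1]
    congr 1
    refine (Finset.sum_bij (fun (τ : Equiv.Perm (Fin k)) (_ : τ ∈ Finset.univ) => extPerm hk τ)
      ?_ ?_ ?_ ?_).symm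
    · intro τ _
      simp only [Finset.mem_filter, Finset.mem_univ, true_and]
      exact extPerm_ge hk τ
    · intro τ₁ _ τ₂ _ h
      apply Equiv.ext
      intro u
      have h1 := congrArg (fun σ : Equiv.Perm (Fin m) => σ (Fin.castLE hk u)) h
      simp only [extPerm_castLE] at h1
      have h2 := congrArg Fin.val h1
      exact Fin.ext h2
    · intro σ hσ
      simp only [Finset.mem_filter, Finset.mem_univ, true_and] at hσ
      obtain ⟨τ, hτ⟩ := exists_extPerm hk σ hσ
      exact ⟨τ, Finset.mem_univ τ, hτ⟩
    · intro τ _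
      exact congrArg c (Aext_extPerm hk i τ).symm
  -- rearrangement fact
  have hrearr : ∀ τ : Equiv.Perm (Fin k), ∃ σ : Equiv.Perm (Fin m),
      Aext k m n i (fun u => i (Fin.castLE hk (τ u))) = fun u => j (σ u) := by
    intro τ
    refine ⟨(extPerm hk τ).trans σ₀, ?_⟩
    rw [← Aext_extPerm hk i τ]
    funext u
    exact hσ₀ (extPerm hk τ u)
  -- uniqueness of monotone rearrangements
  have huniq : ∀ g : Fin m → Fin n, Monotone g →
      (∃ σ : Equiv.Perm (Fin m), g = fun u => j (σ u)) → g = j := by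
    rintro g hg ⟨σ, rfl⟩
    have hone : Monotone (j ∘ ⇑(1 : Equiv.Perm (Fin m))) := fun a b hab => hj hab
    have hum := Tuple.unique_monotone (f := j) (σ := σ) (τ := 1) hg hone
    funext u
    exact congrFun hum u
  constructor
  · rintro ⟨h1, h2⟩
    set τs := Tuple.sort (fun u : Fin k => i (Fin.castLE hk u)) with hτs
    set fs : Fin k → Fin n := fun u => i (Fin.castLE hk (τs u)) with hfs
    have hfs_mono : Monotone fs := by
      rw [hfs, hτs]
      exact Tuple.monotone_sort (fun u : Fin k => i (Fin.castLE hk u))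
    have hAfs_mono : Monotone (Aext k m n i fs) := by
      intro x y hxy
      have hxy' : (x : ℕ) ≤ (y : ℕ) := hxy
      by_cases hx : (x : ℕ) < k
      · by_cases hy : (y : ℕ) < k
        · rw [Aext_lt i fs x hx, Aext_lt i fs y hy]
          exact hfs_mono (Fin.mk_le_mk.mpr hxy')
        · rw [Aext_lt i fs x hx, Aext_ge i fs y hy]
          have hkm : k < m := lt_of_le_of_lt (not_lt.1 hy) y.isLt
          have s1 : fs ⟨(x : ℕ), hx⟩ ≤ i ⟨k, hkm⟩ := by
            rw [hfs]
            exact h2 (Fin.castLE hk (τs ⟨(x : ℕ), hx⟩)) ⟨k, hkm⟩ (τs ⟨(x : ℕ), hx⟩).isLt rfl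
          have s2 : i ⟨k, hkm⟩ ≤ i y := h1 ⟨k, hkm⟩ y (le_refl k) (not_lt.1 hy)
          exact le_trans s1 s2
      · have hy : ¬ (y : ℕ) < k := fun hy' => hx (lt_of_le_of_lt hxy' hy')
        rw [Aext_ge i fs x hx, Aext_ge i fs y hy]
        exact h1 x y (not_lt.1 hx) hxy
    have hAfs_j : Aext k m n i fs = j := by
      apply huniq _ hAfs_mono
      rw [hfs]
      exact hrearr τs
    have hzero : ∀ τ : Equiv.Perm (Fin k),
        (fun u => i (Fin.castLE hk (τ u))) ≠ fs →
        c (Aext k m n i (fun u => i (Fin.castLE hk (τ u)))) = 0 := by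
      intro τ hne
      apply hc
      intro hmono
      apply hne
      have hAj : Aext k m n i (fun u => i (Fin.castLE hk (τ u))) = j :=
        huniq _ hmono (hrearr τ)
      funext u
      calc i (Fin.castLE hk (τ u))
          = Aext k m n i (fun u => i (Fin.castLE hk (τ u))) (Fin.castLE hk u) :=
            (Aext_cast hk i (fun u => i (Fin.castLE hk (τ u))) u).symm
        _ = Aext k m n i fs (Fin.castLE hk u) := by rw [hAj, hAfs_j]
        _ = fs u := Aext_cast hk i fs u
    have hterm : ∀ τ : Equiv.Perm (Fin k),
        c (Aext k m n i (fun u => i (Fin.castLE hk (τ u))))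
        = if (fun u => i (Fin.castLE hk (τ u))) = fs then c j else 0 := by
      intro τ
      by_cases h : (fun u => i (Fin.castLE hk (τ u))) = fs
      · rw [if_pos h, h, hAfs_j]
      · rw [if_neg h]
        exact hzero τ h
    have hsum : ∑ τ : Equiv.Perm (Fin k), c (Aext k m n i (fun u => i (Fin.castLE hk (τ u))))
        = (Finset.univ.filter fun τ : Equiv.Perm (Fin k) =>
            (fun u => i (Fin.castLE hk (τ u))) = fs).card • c j := by
      have hs1 : ∑ τ : Equiv.Perm (Fin k),
          c (Aext k m n i (fun u => i (Fin.castLE hk (τ u))))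
          = ∑ τ : Equiv.Perm (Fin k),
            if (fun u => i (Fin.castLE hk (τ u))) = fs then c j else 0 :=
        Finset.sum_congr rfl fun τ _ => hterm τ
      rw [hs1, Finset.sum_ite, Finset.sum_const, Finset.sum_const_zero, add_zero]
    have hfsC : fs ∈ indexClass n k (fun u : Fin k => i (Fin.castLE hk u)) := by
      simp only [indexClass, Finset.mem_filter, Finset.mem_univ, true_and]
      exact ⟨τs, by rw [hfs]⟩
    have hmaps : ∀ τ : Equiv.Perm (Fin k), τ ∈ (Finset.univ : Finset (Equiv.Perm (Fin k))) →
        (fun u => i (Fin.castLE hk (τ u))) ∈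
          indexClass n k (fun u : Fin k => i (Fin.castLE hk u)) := by
      intro τ _
      simp only [indexClass, Finset.mem_filter, Finset.mem_univ, true_and]
      exact ⟨τ, rfl⟩
    have hpart : (Finset.univ : Finset (Equiv.Perm (Fin k))).card
        = ∑ f ∈ indexClass n k (fun u : Fin k => i (Fin.castLE hk u)),
            (Finset.univ.filter fun τ : Equiv.Perm (Fin k) =>
              (fun u => i (Fin.castLE hk (τ u))) = f).card :=
      Finset.card_eq_sum_card_fiberwise hmaps
    have hfib_eq : ∀ f ∈ indexClass n k (fun u : Fin k => i (Fin.castLE hk u)),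
        (Finset.univ.filter fun τ : Equiv.Perm (Fin k) =>
          (fun u => i (Fin.castLE hk (τ u))) = f).card
        = (Finset.univ.filter fun τ : Equiv.Perm (Fin k) =>
          (fun u => i (Fin.castLE hk (τ u))) = fs).card := by
      intro f hf
      simp only [indexClass, Finset.mem_filter, Finset.mem_univ, true_and] at hf
      obtain ⟨a, ha⟩ := hf
      have hfsC' := hfsC
      simp only [indexClass, Finset.mem_filter, Finset.mem_univ, true_and] at hfsC'
      obtain ⟨b, hb⟩ := hfsC'
      refine Finset.card_bij' (fun ρ _ => ρ * a⁻¹ * b) (fun ρ _ => ρ * b⁻¹ * a) ?_ ?_ ?_ ?_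
      · intro ρ hρ
        simp only [Finset.mem_filter, Finset.mem_univ, true_and] at hρ ⊢
        funext u
        calc i (Fin.castLE hk ((ρ * a⁻¹ * b) u))
            = f (a⁻¹ (b u)) := congrFun hρ (a⁻¹ (b u))
          _ = i (Fin.castLE hk (a (a⁻¹ (b u)))) := by rw [ha]
          _ = i (Fin.castLE hk (b u)) := by rw [Equiv.Perm.inv_def, Equiv.apply_symm_apply]
          _ = fs u := by rw [hb]
      · intro ρ hρ
        simp only [Finset.mem_filter, Finset.mem_univ, true_and] at hρ ⊢
        funext u
        calc i (Fin.castLE hk ((ρ * b⁻¹ * a) u))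
            = fs (b⁻¹ (a u)) := congrFun hρ (b⁻¹ (a u))
          _ = i (Fin.castLE hk (b (b⁻¹ (a u)))) := by rw [hb]
          _ = i (Fin.castLE hk (a u)) := by rw [Equiv.Perm.inv_def, Equiv.apply_symm_apply]
          _ = f u := by rw [ha]
      · intro ρ _
        group
      · intro ρ _
        group
    have hcard : Nat.factorial k
        = (indexClass n k (fun u : Fin k => i (Fin.castLE hk u))).card
          * (Finset.univ.filter fun τ : Equiv.Perm (Fin k) =>
              (fun u => i (Fin.castLE hk (τ u))) = fs).card := by
      have h0 : (Finset.univ : Finset (Equiv.Perm (Fin k))).card = Nat.factorial k := by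
        rw [Finset.card_univ, Fintype.card_perm, Fintype.card_fin]
      rw [← h0, hpart, Finset.sum_congr rfl hfib_eq, Finset.sum_const, smul_eq_mul]
    have hCne : ((indexClass n k (fun u : Fin k => i (Fin.castLE hk u))).card : ℂ) ≠ 0 :=
      Nat.cast_ne_zero.2 (Finset.card_ne_zero_of_mem hfsC)
    have hFne : ((Finset.univ.filter fun τ : Equiv.Perm (Fin k) =>
        (fun u => i (Fin.castLE hk (τ u))) = fs).card : ℂ) ≠ 0 := by
      have hmem : τs ∈ Finset.univ.filter (fun τ : Equiv.Perm (Fin k) =>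
          (fun u => i (Fin.castLE hk (τ u))) = fs) := by
        simp only [Finset.mem_filter, Finset.mem_univ, true_and]
        exact hfs.symm
      exact Nat.cast_ne_zero.2 (Finset.card_ne_zero_of_mem hmem)
    rw [key, hsum, nsmul_eq_mul]
    have hfactC : ((Nat.factorial k : ℕ) : ℂ)
        = ((indexClass n k (fun u : Fin k => i (Fin.castLE hk u))).card : ℂ)
          * ((Finset.univ.filter fun τ : Equiv.Perm (Fin k) =>
              (fun u => i (Fin.castLE hk (τ u))) = fs).card : ℂ) := by
      exact_mod_cast congrArg (Nat.cast : ℕ → ℂ) hcard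
    rw [hfactC]
    field_simp
  · intro hn
    rw [key]
    have hterm : ∀ τ : Equiv.Perm (Fin k),
        c (Aext k m n i (fun u => i (Fin.castLE hk (τ u)))) = 0 := by
      intro τ
      apply hc
      intro hmono
      apply hn
      constructor
      · intro u v hu huv
        have huv' : (u : ℕ) ≤ (v : ℕ) := huv
        have e1 := Aext_ge i (fun u => i (Fin.castLE hk (τ u))) u (not_lt.2 hu)
        have e2 := Aext_ge i (fun u => i (Fin.castLE hk (τ u))) v (not_lt.2 (le_trans hu huv'))
        rw [← e1, ← e2]
        exact hmono huv
      · intro u v hu hv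
        have hvk : ¬ (v : ℕ) < k := by omega
        have e2 := Aext_ge i (fun u => i (Fin.castLE hk (τ u))) v hvk
        have e1 : i u = Aext k m n i (fun u => i (Fin.castLE hk (τ u)))
            (Fin.castLE hk (τ⁻¹ ⟨(u : ℕ), hu⟩)) := by
          rw [Aext_cast hk]
          show i u = i (Fin.castLE hk (τ (τ⁻¹ ⟨(u : ℕ), hu⟩)))
          rw [Equiv.Perm.inv_def, Equiv.apply_symm_apply]
          exact congrArg i (Fin.ext rfl)
        rw [e1, ← e2]
        apply hmono
        show ((Fin.castLE hk (τ⁻¹ ⟨(u : ℕ), hu⟩) : Fin m) : ℕ) ≤ (v : ℕ)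
        have hlt := (τ⁻¹ ⟨(u : ℕ), hu⟩).isLt
        simp only [Fin.coe_castLE]
        omega
    rw [Finset.sum_eq_zero (fun τ _ => hterm τ), mul_zero]
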